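/- The function k ↦ (π²/4) · ((k+2)/(k+1)) · ((1/4)(k+1)(2k+3)(2k+4)(2k+5))^(-1/(k+2)), viewed as a function of a real variable k, is strictly increasing for k ≥ 2. -/

import Mathlib

open Real Set

theorem stmt_2 :
    StrictMonoOn
      (fun k : ℝ => (π^2/4) * ((k+2)/(k+1)) *
        ((1/4) * (k+1) * (2*k+3) * (2*k+4) * (2*k+5)) ^ (-1/(k+2)))
      (Set.Ici (2:ℝ)) := by
  -- numeric fact : exp (122/21) < 378
  have hexp : Real.exp (122/21) < 378 := by
    have h1 : Real.exp (122/21) ^ 21 = Real.exp 1 ^ 122 := by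
      rw [← Real.exp_nat_mul, ← Real.exp_nat_mul]; norm_num
    have h2 : Real.exp 1 ^ 122 < 2.7182818286 ^ 122 :=
      pow_lt_pow_left₀ Real.exp_one_lt_d9 (Real.exp_pos 1).le (by norm_num)
    have h3 : (2.7182818286:ℝ) ^ 122 < 378 ^ 21 := by norm_num
    have h4 : Real.exp (122/21) ^ 21 < (378:ℝ) ^ 21 := by
      rw [h1]; linarith
    exact lt_of_pow_lt_pow_left₀ 21 (by norm_num) h4
  -- derivative of the function at each point
  have H : ∀ x : ℝ, 2 ≤ x →
      HasDerivAt (fun k : ℝ => (π^2/4) * ((k+2)/(k+1)) *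
        ((1/4) * (k+1) * (2*k+3) * (2*k+4) * (2*k+5)) ^ (-1/(k+2)))
        ((π^2/4 * ((1*(x+1) - (x+2)*1)/(x+1)^2)) *
            ((1/4) * (x+1) * (2*x+3) * (2*x+4) * (2*x+5)) ^ (-1/(x+2))
          + (π^2/4) * ((x+2)/(x+1)) *
            ((8*x^3+42*x^2+71*x+77/2) * (-1/(x+2)) *
              ((1/4) * (x+1) * (2*x+3) * (2*x+4) * (2*x+5)) ^ (-1/(x+2) - 1)
             + ((0*(x+2) - (-1)*1)/(x+2)^2) *
               ((1/4) * (x+1) * (2*x+3) * (2*x+4) * (2*x+5)) ^ (-1/(x+2)) *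
               Real.log ((1/4) * (x+1) * (2*x+3) * (2*x+4) * (2*x+5)))) x := by
    intro x hx
    have hx1 : (0:ℝ) < x + 1 := by linarith
    have hx2 : (0:ℝ) < x + 2 := by linarith
    have hP : (0:ℝ) < (1/4) * (x+1) * (2*x+3) * (2*x+4) * (2*x+5) :=
      mul_pos (mul_pos (mul_pos (mul_pos (by norm_num) hx1) (by linarith)) (by linarith))
        (by linarith)
    have hbase : HasDerivAt (fun k : ℝ => (1/4) * (k+1) * (2*k+3) * (2*k+4) * (2*k+5))
        (8*x^3+42*x^2+71*x+77/2) x := by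
      have h : HasDerivAt (fun k : ℝ => 2*k^4 + 14*k^3 + 71/2*k^2 + 77/2*k + 15)
          (8*x^3+42*x^2+71*x+77/2) x := by
        have h0 := ((((hasDerivAt_pow 4 x).const_mul (2:ℝ)).add
            ((hasDerivAt_pow 3 x).const_mul (14:ℝ))).add
            (((hasDerivAt_pow 2 x).const_mul (71/2:ℝ)).add
              ((hasDerivAt_id x).const_mul (77/2:ℝ)))).add_const (15:ℝ)
        convert h0 using 1
        · rfl
        · rfl
        · funext k; simp [id]; ring
        · push_cast; ring
      have heq : (fun k : ℝ => (1/4) * (k+1) * (2*k+3) * (2*k+4) * (2*k+5))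
          = (fun k : ℝ => 2*k^4 + 14*k^3 + 71/2*k^2 + 77/2*k + 15) := by
        funext k; ring
      rw [heq]; exact h
    have hexpo : HasDerivAt (fun k : ℝ => -1/(k+2)) ((0*(x+2) - (-1)*1)/(x+2)^2) x := by
      exact (hasDerivAt_const x (-1:ℝ)).div ((hasDerivAt_id x).add_const 2) hx2.ne'
    have hrpow := hbase.rpow hexpo hP
    have hu : HasDerivAt (fun k : ℝ => (π^2/4) * ((k+2)/(k+1)))
        (π^2/4 * ((1*(x+1) - (x+2)*1)/(x+1)^2)) x := by
      exact (((hasDerivAt_id x).add_const 2).div ((hasDerivAt_id x).add_const 1)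
        hx1.ne').const_mul (π^2/4)
    exact hu.mul hrpow
  apply strictMonoOn_of_deriv_pos (convex_Ici 2)
  · exact fun x hx => ((H x hx).continuousAt).continuousWithinAt
  · intro x hx
    rw [interior_Ici] at hx
    have hx2 : (2:ℝ) ≤ x := le_of_lt hx
    rw [(H x hx2).deriv]
    have hx1' : (0:ℝ) < x + 1 := by linarith
    have hx2' : (0:ℝ) < x + 2 := by linarith
    have hP : (0:ℝ) < (1/4) * (x+1) * (2*x+3) * (2*x+4) * (2*x+5) :=
      mul_pos (mul_pos (mul_pos (mul_pos (by norm_num) hx1') (by linarith)) (by linarith))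
        (by linarith)
    set Px : ℝ := (1/4) * (x+1) * (2*x+3) * (2*x+4) * (2*x+5) with hPx
    set Pp : ℝ := 8*x^3+42*x^2+71*x+77/2 with hPp
    have hB : (0:ℝ) < Px ^ (-1/(x+2)) := Real.rpow_pos_of_pos hP _
    -- the key logarithmic bound
    have hA : (122/21 : ℝ) < Real.log Px := by
      have ht0 : (0:ℝ) ≤ x - 2 := by linarith
      have h378 : (378:ℝ) ≤ Px := by
        rw [hPx]; nlinarith [ht0, pow_nonneg ht0 2, pow_nonneg ht0 3, pow_nonneg ht0 4]
      calc (122/21:ℝ) < Real.log 378 := (Real.lt_log_iff_exp_lt (by norm_num)).2 hexp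
        _ ≤ Real.log Px := Real.log_le_log (by norm_num) h378
    have hR : (x+2)/(x+1) + (x+2)*(Pp/Px) ≤ 122/21 := by
      have ht : (0:ℝ) ≤ x - 2 := by linarith
      have h21 : 21*(x+2)*Px + 21*(x+2)*(x+1)*Pp ≤ 122*(x+1)*Px := by
        rw [hPx, hPp]
        nlinarith [ht, pow_nonneg ht 2, pow_nonneg ht 3, pow_nonneg ht 4, pow_nonneg ht 5]
      have hden : (0:ℝ) < 21*(x+1)*Px := by positivity
      calc (x+2)/(x+1) + (x+2)*(Pp/Px)
          = (21*(x+2)*Px + 21*(x+2)*(x+1)*Pp) / (21*(x+1)*Px) := by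
            field_simp
        _ ≤ (122*(x+1)*Px) / (21*(x+1)*Px) := by
            exact div_le_div_of_nonneg_right h21 hden.le
        _ = 122/21 := by
            rw [mul_comm, mul_div_assoc]
            field_simp
    -- factor the derivative
    have hfac : π ^ 2 / 4 * ((1 * (x + 1) - (x + 2) * 1) / (x + 1) ^ 2) * Px ^ (-1 / (x + 2)) +
          π ^ 2 / 4 * ((x + 2) / (x + 1)) *
            (Pp * (-1 / (x + 2)) * Px ^ (-1 / (x + 2) - 1) +
              (0 * (x + 2) - -1 * 1) / (x + 2) ^ 2 * Px ^ (-1 / (x + 2)) * Real.log Px)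
        = (π ^ 2 / 4) * Px ^ (-1 / (x + 2)) *
            ((Real.log Px - ((x+2)/(x+1) + (x+2)*(Pp/Px))) / ((x+1)*(x+2))) := by
      rw [show (-1/(x+2) - 1 : ℝ) = -1/(x+2) - 1 from rfl, Real.rpow_sub_one hP.ne']
      field_simp
      ring
    rw [hfac]
    have hpi : (0:ℝ) < π ^ 2 / 4 := by positivity
    exact mul_pos (mul_pos hpi hB) (div_pos (by linarith) (by positivity))
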